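/- Let T be a bounded linear operator on L² induced by a K⁰-kernel 𝐓 satisfying condition (iv), let {βₙ} be a complex sequence with βₙ → 0, and set λₙ(λ) = λ(1 − βₙλ)⁻¹. Then for each fixed λ ∈ ∇_s({βₙI + T̃ₙ}), one has λₙ(λ) ∈ Π(Tₙ) for all sufficiently large n, and sup_{t∈ℝ} ‖𝐭′_{n|λₙ(λ)}(t) − 𝐭′_{|λ}(t)‖_{L²} → 0 as n → ∞. -/

import Mathlib

open MeasureTheory Filter Topology ContinuousLinearMap
open scoped ENNReal NNReal

noncomputable section

set_option maxHeartbeats 1600000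

/-- `L²(ℝ)`, the complex Hilbert space of square-integrable functions on `ℝ`. -/
abbrev L2 : Type := MeasureTheory.Lp ℂ 2 (MeasureTheory.volume : MeasureTheory.Measure ℝ)

/-- Bounded linear operators on `L²`. -/
abbrev L2op : Type := L2 →L[ℂ] L2

/-- `T` is the integral operator induced by the kernel `K`:
`(Tf)(s) = ∫ K(s,t) f(t) dt` for every `f ∈ L²` and almost every `s`. -/
def IsInducedBy (T : L2op) (K : ℝ → ℝ → ℂ) : Prop :=
  ∀ f : L2, ∀ᵐ s : ℝ, (T f : ℝ → ℂ) s = ∫ t : ℝ, K s t * (f : ℝ → ℂ) t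

/-- `K` is a `K⁰`-kernel with associated Carleman functions `kt`, `kt'`:
`kt s = conj (K s ·)` and `kt' s = K · s` as elements of `L²`, the kernel is
continuous and vanishes at infinity, and both Carleman functions are continuous
and vanish at infinity in `L²`-norm. -/
structure IsK0Kernel (K : ℝ → ℝ → ℂ) (kt kt' : ℝ → L2) : Prop where
  repr_t : ∀ s : ℝ, (kt s : ℝ → ℂ) =ᵐ[volume] fun x => (starRingEnd ℂ) (K s x)
  repr_t' : ∀ s : ℝ, (kt' s : ℝ → ℂ) =ᵐ[volume] fun x => K x s
  cont : Continuous fun p : ℝ × ℝ => K p.1 p.2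
  vanish : Tendsto (fun p : ℝ × ℝ => K p.1 p.2) (cocompact (ℝ × ℝ)) (𝓝 0)
  cont_t : Continuous kt
  vanish_t : Tendsto kt (cocompact ℝ) (𝓝 0)
  cont_t' : Continuous kt'
  vanish_t' : Tendsto kt' (cocompact ℝ) (𝓝 0)

/-- The set `Π(T)` of regular values of `T`: those `λ` for which `I - λT` is invertible. -/
def regularSet (T : L2op) : Set ℂ := {lam : ℂ | IsUnit (1 - lam • T)}

/-- The resolvent `R_λ(T) = (I - λT)⁻¹` (junk value `0` if `λ ∉ Π(T)`). -/
def res (T : L2op) (lam : ℂ) : L2op := Ring.inverse (1 - lam • T)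

/-- The Fredholm resolvent `T_{|λ} = T R_λ(T)`. -/
def fres (T : L2op) (lam : ℂ) : L2op := T * res T lam

/-- The region of boundedness `∇_b({Sₙ})`. -/
def nablaB (S : ℕ → L2op) : Set ℂ :=
  {ζ : ℂ | ζ ≠ 0 ∧ ∃ M : ℝ, 0 < M ∧ ∃ N : ℕ, ∀ n > N,
      ζ ∈ regularSet (S n) ∧ ‖fres (S n) ζ‖ ≤ M}

/-- The region of strong convergence `∇_s({Sₙ})`: the `ζ ∈ ∇_b({Sₙ})` such that
the Fredholm resolvents `S_{n|ζ}` converge in the strong operator topology. -/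
def nablaS (S : ℕ → L2op) : Set ℂ :=
  {ζ : ℂ | ζ ∈ nablaB S ∧
    ∀ f : L2, ∃ g : L2, Tendsto (fun n => fres (S n) ζ f) atTop (𝓝 g)}

/-- Nuclear (trace class) operator on `L²`. -/
def IsNuclear (T : L2op) : Prop :=
  ∃ g h : ℕ → L2, Summable (fun k => ‖g k‖ * ‖h k‖) ∧
    ∀ f : L2, T f = ∑' k : ℕ, (inner ℂ f (g k) : ℂ) • h k

/-- The characteristic function `χ` of the interval `(-τ, τ)`, with complex values. -/
def chi (t : ℝ) (x : ℝ) : ℂ := Set.indicator (Set.Ioo (-t) t) 1 x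

/-- Condition (iv) for a `K⁰`-kernel `K` inducing `T`: the positive reals `τ n`
strictly increase to `+∞`, `P n` is the orthogonal projection given by multiplication
by `χₙ = chi (τ n)`, the subkernels `Kₙ(s,t) = χₙ(s)K(s,t)` and
`K̃ₙ(s,t) = χₙ(s)K(s,t)χₙ(t)` are `K⁰`-kernels, and the induced operators
`Tₙ = PₙT` and `T̃ₙ = PₙTPₙ` are nuclear. -/
structure ConditionIV (K : ℝ → ℝ → ℂ) (T : L2op) (tau : ℕ → ℝ) (P : ℕ → L2op) : Prop where
  pos : ∀ n, 0 < tau n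
  mono : StrictMono tau
  tendsto_top : Tendsto tau atTop atTop
  proj : ∀ n, ∀ f : L2, (P n f : ℝ → ℂ) =ᵐ[volume] fun x => chi (tau n) x * (f : ℝ → ℂ) x
  subker : ∀ n, ∃ kt kt' : ℝ → L2, IsK0Kernel (fun s t => chi (tau n) s * K s t) kt kt'
  subker' : ∀ n, ∃ kt kt' : ℝ → L2,
      IsK0Kernel (fun s t => chi (tau n) s * K s t * chi (tau n) t) kt kt'
  nuclear : ∀ n, IsNuclear (P n * T)
  nuclear' : ∀ n, IsNuclear (P n * T * P n)

/-- `λₙ(λ) = λ(1 - βₙλ)⁻¹`. -/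
def lamn (b : ℕ → ℂ) (lam : ℂ) (n : ℕ) : ℂ := lam * (1 - b n * lam)⁻¹

/-- The resolvent kernel for `K` at `λ` built from the resolvent Carleman function
`𝐭'_{|λ}(t) = R_λ(T)(kt' t)`:  `𝐓_{|λ}(s,t) = λ⟨𝐭'_{|λ}(t), 𝐭(s)⟩ + 𝐓(s,t)`
(the paper's inner product `⟨a,b⟩ = ∫ a conj b` is `inner b a` in Mathlib). -/
def resKer (T : L2op) (K : ℝ → ℝ → ℂ) (kt kt' : ℝ → L2) (lam : ℂ) (s t : ℝ) : ℂ :=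
  lam * (inner ℂ (kt s) (res T lam (kt' t)) : ℂ) + K s t

/-- The resolvent kernel for the subkernel `Kₙ` at `λ`:
`𝐓_{n|λ}(s,t) = λ χₙ(s) ⟨𝐭'_{n|λ}(t), 𝐭(s)⟩ + 𝐓ₙ(s,t)`, where
`𝐭'_{n|λ}(t) = R_λ(Tₙ) Pₙ (kt' t)` and `𝐓ₙ(s,t) = χₙ(s) 𝐓(s,t)`. -/
def resKerN (T : L2op) (K : ℝ → ℝ → ℂ) (kt kt' : ℝ → L2) (taun : ℝ) (Pn : L2op)
    (lam : ℂ) (s t : ℝ) : ℂ :=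
  lam * chi taun s * (inner ℂ (kt s) (res (Pn * T) lam (Pn (kt' t))) : ℂ) + chi taun s * K s t

/-- `R` is a resolvent kernel for the `K⁰`-kernel `K` at `λ` (Definition 2 of the paper):
`R` is a `K⁰`-kernel satisfying the two simultaneous integral equations and the
square-integrability condition. -/
def IsResolventKernel (K : ℝ → ℝ → ℂ) (lam : ℂ) (R : ℝ → ℝ → ℂ) : Prop :=
  (∃ rt rt' : ℝ → L2, IsK0Kernel R rt rt') ∧
  (∀ s t : ℝ, R s t - lam * ∫ x : ℝ, K s x * R x t = K s t) ∧
  (∀ s t : ℝ, R s t - lam * ∫ x : ℝ, R s x * K x t = K s t) ∧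
  (∀ f : L2, ∫⁻ s : ℝ, ((‖∫ t : ℝ, R s t * (f : ℝ → ℂ) t‖₊ : ℝ≥0) : ℝ≥0∞) ^ 2 < ⊤)


/-! ### Auxiliary lemmas -/

section AuxAlg
variable {A : Type*} [Ring A] [Algebra ℂ A]

omit [Algebra ℂ A] in
lemma ring_inverse_eq_of {a v : A} (h1 : a * v = 1) (h2 : v * a = 1) :
    Ring.inverse a = v := by
  have hu : IsUnit a := isUnit_iff_exists.mpr ⟨v, h1, h2⟩
  obtain ⟨u, rfl⟩ := hu
  rw [Ring.inverse_unit]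
  calc (↑u⁻¹ : A) = ↑u⁻¹ * ((u : A) * v) := by rw [h1, mul_one]
  _ = v := by rw [← mul_assoc, Units.inv_mul, one_mul]

lemma res_expand (a r : A) (lam : ℂ) (h : (1 - lam • a) * r = 1) :
    (1 - lam • a) * (1 + lam • (a * r)) = 1 := by
  have hcomm : (1 - lam • a) * a = a * (1 - lam • a) := by
    rw [sub_mul, mul_sub, one_mul, mul_one, smul_mul_assoc, mul_smul_comm]
  calc (1 - lam • a) * (1 + lam • (a * r))
      = (1 - lam • a) + lam • ((1 - lam • a) * (a * r)) := by
        rw [mul_add, mul_one, mul_smul_comm]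
  _ = (1 - lam • a) + lam • a := by rw [← mul_assoc, hcomm, mul_assoc, h, mul_one]
  _ = 1 := by rw [sub_add_cancel]

lemma res_expand' (a r : A) (lam : ℂ) (h : r * (1 - lam • a) = 1) :
    (1 + lam • (a * r)) * (1 - lam • a) = 1 := by
  calc (1 + lam • (a * r)) * (1 - lam • a)
      = (1 - lam • a) + lam • ((a * r) * (1 - lam • a)) := by
        rw [add_mul, one_mul, smul_mul_assoc]
  _ = (1 - lam • a) + lam • a := by rw [mul_assoc, h, mul_one]
  _ = 1 := by rw [sub_add_cancel]

lemma res_eq_one_add (a r : A) (lam : ℂ) (h : (1 - lam • a) * r = 1) :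
    r = 1 + lam • (a * r) := by
  rw [sub_mul, one_mul, smul_mul_assoc] at h
  exact sub_eq_iff_eq_add.mp h

lemma alg_main (p t r : A) (β lam : ℂ)
    (hβ : (1 : ℂ) - β * lam ≠ 0) (hp : p * p = p)
    (h1 : (1 - lam • (β • (1 : A) + p * t * p)) * r = 1)
    (h2 : r * (1 - lam • (β • (1 : A) + p * t * p)) = 1) :
    ((1 - (lam * (1 - β * lam)⁻¹) • (p * t)) * (1 + lam • (p * (r * (p * t)))) = 1)
    ∧ ((1 + lam • (p * (r * (p * t)))) * (1 - (lam * (1 - β * lam)⁻¹) • (p * t)) = 1)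
    ∧ ((1 + lam • (p * (r * (p * t)))) * p = (1 - lam * β) • (p * r)) := by
  have hne : (1 : ℂ) - lam * β ≠ 0 := by rwa [mul_comm] at hβ
  set s : A := β • (1 : A) + p * t * p with hs
  set c : ℂ := (1 - lam * β)⁻¹ with hc
  set μ : ℂ := lam * (1 - β * lam)⁻¹ with hμ
  have hμc : μ = lam * c := by rw [hμ, hc, mul_comm β lam]
  have hμlam : μ * (1 - lam * β) = lam := by
    rw [hμc, hc, mul_assoc, inv_mul_cancel₀ hne, mul_one]
  have e1 : lam • (s * r) = r - 1 := by
    have h := h1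
    rw [sub_mul, one_mul, smul_mul_assoc] at h
    rw [eq_sub_iff_add_eq, ← h]
    abel
  have e2 : lam • (r * s) = r - 1 := by
    have h := h2
    rw [mul_sub, mul_one, mul_smul_comm] at h
    rw [eq_sub_iff_add_eq, ← h]
    abel
  have hptp : p * t * p = s - β • 1 := by rw [hs, add_sub_cancel_left]
  have hps : p * s = β • p + p * t * p := by
    rw [hs, mul_add, mul_smul_comm, mul_one, ← mul_assoc, ← mul_assoc, hp]
  have hsp : s * p = β • p + p * t * p := by
    rw [hs, add_mul, smul_mul_assoc, one_mul, mul_assoc (p*t) p p, hp]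
  have hpm : (p - 1) * s = β • (p - 1) := by
    rw [sub_mul, one_mul, hps, hs, smul_sub]
    abel
  have hmp : s * (p - 1) = β • (p - 1) := by
    rw [mul_sub, mul_one, hsp, hs, smul_sub]
    abel
  have e6 : (p - 1) * r = c • (p - 1) := by
    have step : (p - 1) * (1 - lam • s) = (1 - lam * β) • (p - 1) := by
      rw [mul_sub, mul_one, mul_smul_comm, hpm, smul_smul, sub_smul, one_smul]
    have key : (1 - lam * β) • ((p - 1) * r) = p - 1 := by
      rw [← smul_mul_assoc, ← step, mul_assoc, h1, mul_one]
    rw [hc, eq_inv_smul_iff₀ hne, key]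
  have e5 : r * (p - 1) = c • (p - 1) := by
    have step : (1 - lam • s) * (p - 1) = (1 - lam * β) • (p - 1) := by
      rw [sub_mul, one_mul, smul_mul_assoc, hmp, smul_smul, sub_smul, one_smul]
    have key : (1 - lam * β) • (r * (p - 1)) = p - 1 := by
      rw [← mul_smul_comm, ← step, ← mul_assoc, h2, one_mul]
    rw [hc, eq_inv_smul_iff₀ hne, key]
  have epr : p * r = r + c • (p - 1) := by
    have h : p * r - r = c • (p - 1) := by rw [← e6, sub_mul, one_mul]
    rw [← h]; abel
  have hrp : r * p = r + c • (p - 1) := by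
    have h : r * p - r = c • (p - 1) := by rw [← e5, mul_sub, mul_one]
    rw [← h]; abel
  have e7 : p * (r * (p * t)) = p * (r * t) := by
    calc p * (r * (p * t)) = p * ((r * p) * t) := by rw [mul_assoc r p t]
    _ = p * ((r + c • (p - 1)) * t) := by rw [hrp]
    _ = p * (r * t) + c • (p * ((p - 1) * t)) := by
        rw [add_mul, smul_mul_assoc, mul_add, mul_smul_comm]
    _ = p * (r * t) := by
        have h : p * ((p - 1) * t) = 0 := by
          rw [← mul_assoc, mul_sub, mul_one, hp, sub_self, zero_mul]
        rw [h, smul_zero, add_zero]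
  have hx : ∀ x : A, lam • ((s - β • 1) * (r * x)) = (1 - lam * β) • (r * x) - x := by
    intro x
    rw [sub_mul, smul_mul_assoc β, one_mul, smul_sub, smul_smul, ← mul_assoc s r x,
      ← smul_mul_assoc lam, e1, sub_mul, one_mul, sub_smul, one_smul]
    abel
  have hr2 : lam • (r * (s - β • 1)) = (1 - lam * β) • r - 1 := by
    rw [mul_sub, mul_smul_comm, mul_one, smul_sub, e2, smul_smul, sub_smul, one_smul]
    abel
  have h10 : lam • (p * (r * t)) = lam • (r * t) + (μ • (p * t) - μ • t) := by
    have h : p * (r * t) = r * t + c • (p * t - t) := by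
      rw [← mul_assoc p r t, epr, add_mul, smul_mul_assoc, sub_mul, one_mul]
    rw [h, smul_add, smul_smul, ← hμc, smul_sub]
  refine ⟨?_, ?_, ?_⟩
  · rw [e7]
    have h9 : (p * t) * (p * (r * t)) = (s - β • 1) * (r * t) := by
      rw [← mul_assoc, hptp]
    simp only [sub_mul, mul_add, mul_sub, add_mul, one_mul, mul_one, smul_mul_assoc,
      mul_smul_comm, smul_smul, smul_sub, smul_add]
    rw [h9]
    rw [show (lam * μ) • ((s - β • 1) * (r * t)) = lam • (r * t) - μ • t from by
      rw [mul_comm lam μ, mul_smul, hx t, smul_sub, smul_smul, hμlam]]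
    rw [h10]
    abel
  · have hy : lam • ((p * (r * (p * t))) * (p * t))
        = (1 - lam * β) • (p * (r * t)) - p * t := by
      have assoc : (p * (r * (p * t))) * (p * t) = p * ((r * (s - β • 1)) * t) := by
        rw [mul_assoc p (r * (p * t)) (p * t), mul_assoc r (p*t) (p*t),
          ← mul_assoc (p*t) p t, hptp, ← mul_assoc r (s - β • 1) t]
      rw [assoc, ← mul_smul_comm, ← smul_mul_assoc lam, hr2, sub_mul, smul_mul_assoc,
        one_mul, mul_sub, mul_smul_comm]
    simp only [sub_mul, mul_add, mul_sub, add_mul, one_mul, mul_one, smul_mul_assoc,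
      mul_smul_comm, smul_smul, smul_sub, smul_add]
    rw [show (μ * lam) • (p * (r * (p * t)) * (p * t)) = lam • (p * (r * t)) - μ • (p * t)
      from by rw [mul_smul, hy, smul_sub, smul_smul, hμlam]]
    rw [e7]
    abel
  · have assoc : (p * (r * (p * t))) * p = p * (r * (s - β • 1)) := by
      rw [mul_assoc p (r * (p*t)) p, mul_assoc r (p*t) p, hptp]
    simp only [add_mul, one_mul, smul_mul_assoc]
    rw [assoc, ← mul_smul_comm, hr2, mul_sub, mul_one, mul_smul_comm]
    abel

end AuxAlg

section AuxPn

lemma chi_mul_self (τ x : ℝ) : chi τ x * chi τ x = chi τ x := by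
  unfold chi
  by_cases h : x ∈ Set.Ioo (-τ) τ <;> simp [h]

lemma norm_chi_le (τ x : ℝ) : ‖chi τ x‖ ≤ 1 := by
  unfold chi
  by_cases h : x ∈ Set.Ioo (-τ) τ <;> simp [h]

lemma chi_eq_one (τ x : ℝ) (h : |x| < τ) : chi τ x = 1 := by
  have hx : x ∈ Set.Ioo (-τ) τ := by
    rw [Set.mem_Ioo]; constructor <;> [linarith [abs_lt.mp h]; linarith [abs_lt.mp h]]
  simp [chi, hx]

lemma Pn_apply_norm_le (Pn : L2op) (τ : ℝ)
    (hproj : ∀ f : L2, (Pn f : ℝ → ℂ) =ᵐ[volume] fun x => chi τ x * (f : ℝ → ℂ) x)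
    (f : L2) : ‖Pn f‖ ≤ ‖f‖ := by
  rw [Lp.norm_def, Lp.norm_def]
  apply ENNReal.toReal_mono (Lp.eLpNorm_ne_top f)
  calc eLpNorm (Pn f : ℝ → ℂ) 2 volume
      = eLpNorm (fun x => chi τ x * (f : ℝ → ℂ) x) 2 volume := eLpNorm_congr_ae (hproj f)
  _ ≤ eLpNorm (f : ℝ → ℂ) 2 volume := by
      apply eLpNorm_mono_ae
      apply ae_of_all
      intro x
      rw [norm_mul]
      calc ‖chi τ x‖ * ‖(f : ℝ → ℂ) x‖ ≤ 1 * ‖(f : ℝ → ℂ) x‖ :=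
        mul_le_mul_of_nonneg_right (norm_chi_le τ x) (norm_nonneg _)
      _ = ‖(f : ℝ → ℂ) x‖ := one_mul _

lemma Pn_norm_le (Pn : L2op) (τ : ℝ)
    (hproj : ∀ f : L2, (Pn f : ℝ → ℂ) =ᵐ[volume] fun x => chi τ x * (f : ℝ → ℂ) x) :
    ‖Pn‖ ≤ 1 :=
  ContinuousLinearMap.opNorm_le_bound _ zero_le_one
    (fun f => by rw [one_mul]; exact Pn_apply_norm_le Pn τ hproj f)

lemma Pn_sq (Pn : L2op) (τ : ℝ)
    (hproj : ∀ f : L2, (Pn f : ℝ → ℂ) =ᵐ[volume] fun x => chi τ x * (f : ℝ → ℂ) x) :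
    Pn * Pn = Pn := by
  refine ContinuousLinearMap.ext fun f => ?_
  rw [ContinuousLinearMap.mul_apply]
  refine Lp.ext (p := (2 : ℝ≥0∞)) (μ := (volume : Measure ℝ)) ?_
  filter_upwards [hproj (Pn f), hproj f] with x h1 h2
  rw [h1, h2, ← mul_assoc, chi_mul_self]

lemma Pn_tendsto (P : ℕ → L2op) (tau : ℕ → ℝ)
    (hproj : ∀ n, ∀ f : L2, (P n f : ℝ → ℂ) =ᵐ[volume] fun x => chi (tau n) x * (f : ℝ → ℂ) x)
    (htau : Tendsto tau atTop atTop) (f : L2) :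
    Tendsto (fun n => P n f) atTop (𝓝 f) := by
  rw [tendsto_iff_norm_sub_tendsto_zero]
  have key : ∀ n, ‖P n f - f‖
      = (eLpNorm (fun x => chi (tau n) x * (f : ℝ → ℂ) x - (f : ℝ → ℂ) x) 2 volume).toReal := by
    intro n
    rw [Lp.norm_def]
    congr 1
    apply eLpNorm_congr_ae
    filter_upwards [Lp.coeFn_sub (P n f) f, hproj n f] with x h1 h2
    rw [h1, Pi.sub_apply, h2]
  simp only [key]
  have hform : ∀ g : ℝ → ℂ,
      eLpNorm g 2 volume = (∫⁻ x, (‖g x‖₊ : ℝ≥0∞) ^ (2:ℕ)) ^ (1/(2:ℝ)) := by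
    intro g
    have h22 : ((2:ℝ≥0∞)).toReal = ((2:ℕ):ℝ) := by norm_num
    rw [eLpNorm_eq_lintegral_rpow_enorm_toReal (by norm_num) (by norm_num), h22]
    simp_rw [ENNReal.rpow_natCast]
    norm_num
    rfl
  have hfmeas : AEMeasurable (f : ℝ → ℂ) volume := (Lp.aestronglyMeasurable f).aemeasurable
  have hfin : ∫⁻ x, (‖(f : ℝ → ℂ) x‖₊ : ℝ≥0∞) ^ (2:ℕ) ≠ ⊤ := by
    intro htop
    have h1 := Lp.eLpNorm_lt_top f
    rw [hform, htop] at h1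
    rw [ENNReal.top_rpow_of_pos (by norm_num)] at h1
    exact (lt_irrefl _) h1
  have hI : Tendsto
      (fun n => ∫⁻ x, (‖chi (tau n) x * (f : ℝ → ℂ) x - (f : ℝ → ℂ) x‖₊ : ℝ≥0∞) ^ (2:ℕ))
      atTop (𝓝 0) := by
    have h0 : (0 : ℝ≥0∞) = ∫⁻ (_ : ℝ), 0 := lintegral_zero.symm
    rw [h0]
    apply tendsto_lintegral_of_dominated_convergence'
      (bound := fun x => ((2:ℝ≥0∞) * ‖(f : ℝ → ℂ) x‖₊) ^ (2:ℕ))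
    · intro n
      have hchi : Measurable (chi (tau n)) :=
        Measurable.indicator measurable_const measurableSet_Ioo
      exact ((((hchi.aemeasurable.mul hfmeas).sub hfmeas).enorm).pow_const 2)
    · intro n
      apply ae_of_all
      intro x
      refine pow_le_pow_left₀ zero_le ?_ 2
      calc (‖chi (tau n) x * (f:ℝ→ℂ) x - (f:ℝ→ℂ) x‖₊ : ℝ≥0∞)
          ≤ (‖chi (tau n) x * (f:ℝ→ℂ) x‖₊ : ℝ≥0∞) + ‖(f:ℝ→ℂ) x‖₊ := by
            exact_mod_cast nnnorm_sub_le _ _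
      _ ≤ (‖(f:ℝ→ℂ) x‖₊ : ℝ≥0∞) + ‖(f:ℝ→ℂ) x‖₊ := by
            gcongr
            have h : ‖chi (tau n) x * (f:ℝ→ℂ) x‖ ≤ ‖(f:ℝ→ℂ) x‖ := by
              rw [norm_mul]
              calc ‖chi (tau n) x‖ * ‖(f:ℝ→ℂ) x‖ ≤ 1 * ‖(f:ℝ→ℂ) x‖ :=
                mul_le_mul_of_nonneg_right (norm_chi_le _ x) (norm_nonneg _)
              _ = _ := one_mul _
            exact_mod_cast h
      _ = 2 * ‖(f:ℝ→ℂ) x‖₊ := (two_mul _).symm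
    · rw [show (fun x => ((2:ℝ≥0∞) * ‖(f : ℝ → ℂ) x‖₊) ^ (2:ℕ))
          = fun x => 4 * (‖(f : ℝ → ℂ) x‖₊ : ℝ≥0∞) ^ (2:ℕ) from funext fun x => by ring]
      rw [lintegral_const_mul' _ _ (by norm_num)]
      exact (ENNReal.mul_lt_top (by norm_num) (lt_top_iff_ne_top.mpr hfin)).ne
    · apply ae_of_all
      intro x
      have hev : ∀ᶠ n in atTop, tau n > |x| := htau.eventually_gt_atTop |x|
      apply Tendsto.congr' _ (tendsto_const_nhds (x := (0:ℝ≥0∞)))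
      filter_upwards [hev] with n hn
      rw [chi_eq_one (tau n) x hn, one_mul, sub_self]
      simp
  have h2 : Tendsto (fun n =>
      eLpNorm (fun x => chi (tau n) x * (f:ℝ→ℂ) x - (f:ℝ→ℂ) x) 2 volume) atTop (𝓝 0) := by
    simp only [hform]
    have hcont : Continuous fun y : ℝ≥0∞ => y ^ (1/(2:ℝ)) := ENNReal.continuous_rpow_const
    have h := (hcont.tendsto 0).comp hI
    simpa [ENNReal.zero_rpow_of_pos, Function.comp_def] using h
  have h3 := (ENNReal.tendsto_toReal (a := (0:ℝ≥0∞)) (by simp)).comp h2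
  simpa [Function.comp_def] using h3

lemma Pn_comp_tendsto (P : ℕ → L2op) (tau : ℕ → ℝ)
    (hproj : ∀ n, ∀ f : L2, (P n f : ℝ → ℂ) =ᵐ[volume] fun x => chi (tau n) x * (f : ℝ → ℂ) x)
    (htau : Tendsto tau atTop atTop) (u : ℕ → L2) (y : L2)
    (hu : Tendsto u atTop (𝓝 y)) :
    Tendsto (fun n => P n (u n)) atTop (𝓝 y) := by
  rw [tendsto_iff_norm_sub_tendsto_zero]
  have hbound : ∀ n, ‖P n (u n) - y‖ ≤ ‖u n - y‖ + ‖P n y - y‖ := by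
    intro n
    calc ‖P n (u n) - y‖ = ‖P n (u n - y) + (P n y - y)‖ := by rw [map_sub, sub_add_sub_cancel]
    _ ≤ ‖P n (u n - y)‖ + ‖P n y - y‖ := norm_add_le _ _
    _ ≤ ‖u n - y‖ + ‖P n y - y‖ := by
        gcongr
        exact Pn_apply_norm_le (P n) (tau n) (hproj n) _
  apply squeeze_zero (fun n => norm_nonneg _) hbound
  have h1 : Tendsto (fun n => ‖u n - y‖) atTop (𝓝 0) := tendsto_iff_norm_sub_tendsto_zero.mp hu
  have h2 : Tendsto (fun n => ‖P n y - y‖) atTop (𝓝 0) :=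
    tendsto_iff_norm_sub_tendsto_zero.mp (Pn_tendsto P tau hproj htau y)
  simpa using h1.add h2

end AuxPn

/-- The approximating operators `Sₙ = βₙ I + T̃ₙ`. -/
def Sop (b : ℕ → ℂ) (P : ℕ → L2op) (T : L2op) (n : ℕ) : L2op :=
  b n • 1 + P n * T * P n

theorem statement3 (T : L2op) (K : ℝ → ℝ → ℂ) (kt kt' : ℝ → L2)
    (hK : IsK0Kernel K kt kt') (hT : IsInducedBy T K)
    (tau : ℕ → ℝ) (P : ℕ → L2op) (hiv : ConditionIV K T tau P)
    (b : ℕ → ℂ) (hb : Tendsto b atTop (𝓝 (0 : ℂ)))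
    (lam : ℂ) (hlam : lam ∈ nablaS (fun n => b n • (1 : L2op) + P n * T * P n)) :
    (∀ᶠ n in atTop, lamn b lam n ∈ regularSet (P n * T)) ∧
    Tendsto (fun n => ⨆ t : ℝ,
        ‖res (P n * T) (lamn b lam n) (P n (kt' t)) - res T lam (kt' t)‖)
      atTop (𝓝 (0 : ℝ)) := by
    classical
  have hlam2 : lam ∈ nablaS (Sop b P T) := hlam
  simp only [nablaS, nablaB, Set.mem_setOf_eq] at hlam2
  obtain ⟨⟨hlam0, M, hMpos, N, hMN⟩, hconv⟩ := hlam2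
  have hproj := hiv.proj
  have htau := hiv.tendsto_top
  have hPsq : ∀ n, P n * P n = P n := fun n => Pn_sq (P n) (tau n) (hproj n)
  have hPle : ∀ n (f : L2), ‖P n f‖ ≤ ‖f‖ := fun n => Pn_apply_norm_le (P n) (tau n) (hproj n)
  have hPnorm : ∀ n, ‖P n‖ ≤ 1 := fun n => Pn_norm_le (P n) (tau n) (hproj n)
  -- resolvent identities for Sₙ
  have hUnit : ∀ n, N < n → IsUnit (1 - lam • Sop b P T n) := fun n hn => (hMN n hn).1
  have hres1 : ∀ n, N < n → (1 - lam • Sop b P T n) * res (Sop b P T n) lam = 1 :=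
    fun n hn => Ring.mul_inverse_cancel _ (hUnit n hn)
  have hres2 : ∀ n, N < n → res (Sop b P T n) lam * (1 - lam • Sop b P T n) = 1 :=
    fun n hn => Ring.inverse_mul_cancel _ (hUnit n hn)
  have hFnorm : ∀ n, N < n → ‖fres (Sop b P T n) lam‖ ≤ M := fun n hn => (hMN n hn).2
  have hRF : ∀ n, N < n → res (Sop b P T n) lam = 1 + lam • fres (Sop b P T n) lam :=
    fun n hn => res_eq_one_add _ _ lam (hres1 n hn)
  have hRnorm : ∀ n, N < n → ‖res (Sop b P T n) lam‖ ≤ 1 + ‖lam‖ * M := by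
    intro n hn
    rw [hRF n hn]
    calc ‖(1 : L2op) + lam • fres (Sop b P T n) lam‖
        ≤ ‖(1 : L2op)‖ + ‖lam • fres (Sop b P T n) lam‖ := norm_add_le _ _
    _ ≤ 1 + ‖lam‖ * M := by
        apply add_le_add
        · rw [ContinuousLinearMap.one_def]; exact ContinuousLinearMap.norm_id_le
        · exact le_trans (ContinuousLinearMap.opNorm_smul_le lam (fres (Sop b P T n) lam))
            (mul_le_mul_of_nonneg_left (hFnorm n hn) (norm_nonneg lam))
  -- the strong limit B of the Fredholm resolvents
  have hconv' : ∀ f : L2, ∃ g, Tendsto (fun n => fres (Sop b P T n) lam f) atTop (𝓝 g) := hconv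
  choose Bf hBf using hconv'
  have hBadd : ∀ f g, Bf (f + g) = Bf f + Bf g := by
    intro f g
    refine tendsto_nhds_unique (hBf (f + g)) ?_
    refine ((hBf f).add (hBf g)).congr fun n => ?_
    rw [← map_add]
  have hBsmul : ∀ (a : ℂ) (f : L2), Bf (a • f) = a • Bf f := by
    intro a f
    refine tendsto_nhds_unique (hBf (a • f)) ?_
    refine ((hBf f).const_smul a).congr fun n => ?_
    rw [← _root_.map_smul]
  have hBle : ∀ f, ‖Bf f‖ ≤ M * ‖f‖ := by
    intro f
    apply le_of_tendsto (hBf f).norm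
    filter_upwards [eventually_gt_atTop N] with n hn
    calc ‖fres (Sop b P T n) lam f‖ ≤ ‖fres (Sop b P T n) lam‖ * ‖f‖ :=
      ContinuousLinearMap.le_opNorm _ _
    _ ≤ M * ‖f‖ := mul_le_mul_of_nonneg_right (hFnorm n hn) (norm_nonneg f)
  let Blin : L2 →ₗ[ℂ] L2 :=
    { toFun := Bf
      map_add' := hBadd
      map_smul' := hBsmul }
  let B : L2op := LinearMap.mkContinuous Blin M hBle
  set A : L2op := 1 + lam • B with hA
  have hAapp : ∀ f : L2, A f = f + lam • Bf f := by
    intro f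
    rw [hA]
    rw [ContinuousLinearMap.add_apply, ContinuousLinearMap.one_apply,
      ContinuousLinearMap.smul_apply]
    rfl
  have hxconv : ∀ f : L2,
      Tendsto (fun n => f + lam • fres (Sop b P T n) lam f) atTop (𝓝 (A f)) := by
    intro f
    rw [hAapp f]
    exact tendsto_const_nhds.add ((hBf f).const_smul lam)
  -- strong convergence Sₙ uₙ → T x
  have hSx : ∀ (u : ℕ → L2) (x : L2), Tendsto u atTop (𝓝 x) →
      Tendsto (fun n => Sop b P T n (u n)) atTop (𝓝 (T x)) := by
    intro u x hu
    have h1 : Tendsto (fun n => b n • u n) atTop (𝓝 0) := by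
      have h := hb.smul hu
      rw [zero_smul] at h
      exact h
    have h2 : Tendsto (fun n => P n (T (P n (u n)))) atTop (𝓝 (T x)) := by
      apply Pn_comp_tendsto P tau hproj htau
      exact (T.continuous.tendsto x).comp (Pn_comp_tendsto P tau hproj htau u x hu)
    have heq : (fun n => Sop b P T n (u n)) = fun n => b n • u n + P n (T (P n (u n))) := by
      funext n
      simp [Sop, ContinuousLinearMap.add_apply, ContinuousLinearMap.smul_apply,
        ContinuousLinearMap.one_apply, ContinuousLinearMap.mul_apply]
    rw [heq]
    have h3 := h1.add h2
    rw [zero_add] at h3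
    exact h3
  -- (1 - λT) A = 1
  have hTA : (1 - lam • T) * A = 1 := by
    refine ContinuousLinearMap.ext fun f => ?_
    have hx := hxconv f
    have h1 : Tendsto (fun n => (1 - lam • T) (f + lam • fres (Sop b P T n) lam f)) atTop
        (𝓝 ((1 - lam • T) (A f))) := ((1 - lam • T).continuous.tendsto (A f)).comp hx
    have key : ∀ᶠ n in atTop,
        (1 - lam • T) (f + lam • fres (Sop b P T n) lam f)
          = f + lam • (Sop b P T n (f + lam • fres (Sop b P T n) lam f)
              - T (f + lam • fres (Sop b P T n) lam f)) := by
      filter_upwards [eventually_gt_atTop N] with n hn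
      set x : L2 := f + lam • fres (Sop b P T n) lam f with hxdef
      have hop : (1 - lam • Sop b P T n) * (1 + lam • fres (Sop b P T n) lam) = 1 := by
        have h := res_expand (Sop b P T n) (res (Sop b P T n) lam) lam (hres1 n hn)
        exact h
      have hx' : (1 + lam • fres (Sop b P T n) lam) f = x := by
        rw [hxdef, ContinuousLinearMap.add_apply, ContinuousLinearMap.one_apply,
          ContinuousLinearMap.smul_apply]
      have hS1 : (1 - lam • Sop b P T n) x = f := by
        calc (1 - lam • Sop b P T n) x
            = ((1 - lam • Sop b P T n) * (1 + lam • fres (Sop b P T n) lam)) f := by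
              rw [ContinuousLinearMap.mul_apply, hx']
        _ = f := by rw [hop, ContinuousLinearMap.one_apply]
      have e1 : (1 - lam • T) x = x - lam • T x := by
        rw [ContinuousLinearMap.sub_apply, ContinuousLinearMap.one_apply,
          ContinuousLinearMap.smul_apply]
      have e2 : (1 - lam • Sop b P T n) x = x - lam • Sop b P T n x := by
        rw [ContinuousLinearMap.sub_apply, ContinuousLinearMap.one_apply,
          ContinuousLinearMap.smul_apply]
      rw [e1, ← hS1, e2, smul_sub]
      abel
    have hz : Tendsto (fun n => Sop b P T n (f + lam • fres (Sop b P T n) lam f)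
        - T (f + lam • fres (Sop b P T n) lam f)) atTop (𝓝 0) := by
      have l1 : Tendsto (fun n => Sop b P T n (f + lam • fres (Sop b P T n) lam f))
          atTop (𝓝 (T (A f))) := hSx _ _ hx
      have l2 : Tendsto (fun n => T (f + lam • fres (Sop b P T n) lam f))
          atTop (𝓝 (T (A f))) := (T.continuous.tendsto (A f)).comp hx
      have l3 := l1.sub l2
      rw [sub_self] at l3
      exact l3
    have h2 : Tendsto (fun n => f + lam • (Sop b P T n (f + lam • fres (Sop b P T n) lam f)
        - T (f + lam • fres (Sop b P T n) lam f))) atTop (𝓝 f) := by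
      have h := tendsto_const_nhds (x := f) (f := atTop (α := ℕ))
      have h4 := h.add (hz.const_smul lam)
      rw [smul_zero, add_zero] at h4
      exact h4
    have hfinal : (1 - lam • T) (A f) = f := tendsto_nhds_unique (h1.congr' key) h2
    rw [ContinuousLinearMap.mul_apply, hfinal, ContinuousLinearMap.one_apply]
  -- A (1 - λT) = 1
  have hAT : A * (1 - lam • T) = 1 := by
    refine ContinuousLinearMap.ext fun f => ?_
    set g : L2 := (1 - lam • T) f with hgdef
    have h1 : Tendsto (fun n => g + lam • fres (Sop b P T n) lam g) atTop (𝓝 (A g)) := hxconv g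
    have hw : Tendsto (fun n => Sop b P T n f - T f) atTop (𝓝 0) := by
      have l1 := hSx (fun _ => f) f tendsto_const_nhds
      have l3 := l1.sub (tendsto_const_nhds (x := T f))
      rw [sub_self] at l3
      exact l3
    have hFw : Tendsto (fun n => fres (Sop b P T n) lam (Sop b P T n f - T f)) atTop (𝓝 0) := by
      rw [tendsto_zero_iff_norm_tendsto_zero]
      have hnw := (tendsto_zero_iff_norm_tendsto_zero.mp hw).const_mul M
      rw [mul_zero] at hnw
      apply tendsto_of_tendsto_of_tendsto_of_le_of_le' (tendsto_const_nhds (x := (0:ℝ))) hnw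
      · exact Eventually.of_forall fun n => norm_nonneg _
      · filter_upwards [eventually_gt_atTop N] with n hn
        calc ‖fres (Sop b P T n) lam (Sop b P T n f - T f)‖
            ≤ ‖fres (Sop b P T n) lam‖ * ‖Sop b P T n f - T f‖ :=
              ContinuousLinearMap.le_opNorm _ _
        _ ≤ M * ‖Sop b P T n f - T f‖ :=
              mul_le_mul_of_nonneg_right (hFnorm n hn) (norm_nonneg _)
    have key : ∀ᶠ n in atTop,
        g + lam • fres (Sop b P T n) lam g
          = f + lam • ((Sop b P T n f - T f)
              + lam • fres (Sop b P T n) lam (Sop b P T n f - T f)) := by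
      filter_upwards [eventually_gt_atTop N] with n hn
      have hop : (1 + lam • fres (Sop b P T n) lam) * (1 - lam • Sop b P T n) = 1 :=
        res_expand' (Sop b P T n) (res (Sop b P T n) lam) lam (hres2 n hn)
      have happ : ∀ y : L2, (1 + lam • fres (Sop b P T n) lam) y
          = y + lam • fres (Sop b P T n) lam y := by
        intro y
        rw [ContinuousLinearMap.add_apply, ContinuousLinearMap.one_apply,
          ContinuousLinearMap.smul_apply]
      have hgsplit : g = (1 - lam • Sop b P T n) f + lam • (Sop b P T n f - T f) := by
        rw [hgdef, ContinuousLinearMap.sub_apply, ContinuousLinearMap.one_apply,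
          ContinuousLinearMap.smul_apply, ContinuousLinearMap.sub_apply,
          ContinuousLinearMap.one_apply, ContinuousLinearMap.smul_apply, smul_sub]
        abel
      have hid : (1 + lam • fres (Sop b P T n) lam) ((1 - lam • Sop b P T n) f) = f := by
        rw [← ContinuousLinearMap.mul_apply, hop, ContinuousLinearMap.one_apply]
      calc g + lam • fres (Sop b P T n) lam g
          = (1 + lam • fres (Sop b P T n) lam) g := (happ g).symm
      _ = (1 + lam • fres (Sop b P T n) lam) ((1 - lam • Sop b P T n) f)
            + lam • (1 + lam • fres (Sop b P T n) lam) (Sop b P T n f - T f) := by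
            rw [hgsplit, map_add, _root_.map_smul]
      _ = f + lam • ((Sop b P T n f - T f)
            + lam • fres (Sop b P T n) lam (Sop b P T n f - T f)) := by
            rw [hid, happ]
    have h2 : Tendsto (fun n => f + lam • ((Sop b P T n f - T f)
        + lam • fres (Sop b P T n) lam (Sop b P T n f - T f))) atTop (𝓝 f) := by
      have h := tendsto_const_nhds (x := f) (f := atTop (α := ℕ))
      have hsum := (hw.add (hFw.const_smul lam)).const_smul lam
      rw [smul_zero, add_zero, smul_zero] at hsum
      have h5 := h.add hsum
      rw [add_zero] at h5
      exact h5
    have hfinal : A g = f := tendsto_nhds_unique (h1.congr' key) h2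
    rw [ContinuousLinearMap.mul_apply, ← hgdef, hfinal, ContinuousLinearMap.one_apply]
  have hresT : res T lam = A := ring_inverse_eq_of hTA hAT
  -- good indices
  have hsmall : ∀ᶠ n in atTop, ‖b n * lam‖ < 1/2 := by
    have h : Tendsto (fun n => b n * lam) atTop (𝓝 0) := by
      have h0 := hb.mul_const lam
      rw [zero_mul] at h0
      exact h0
    exact NormedAddCommGroup.tendsto_nhds_zero.mp h (1/2) (by norm_num)
  have hmain : ∀ n, N < n → ‖b n * lam‖ < 1/2 →
      (lamn b lam n ∈ regularSet (P n * T)) ∧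
      (res (P n * T) (lamn b lam n) * P n = (1 - lam * b n) • (P n * res (Sop b P T n) lam)) := by
    intro n hn hsm
    have hβ : (1:ℂ) - b n * lam ≠ 0 := by
      intro h0
      rw [sub_eq_zero] at h0
      rw [← h0] at hsm
      simp at hsm
      linarith
    obtain ⟨hc1, hc2, hc3⟩ := alg_main (P n) T (res (Sop b P T n) lam) (b n) lam hβ
      (hPsq n) (hres1 n hn) (hres2 n hn)
    have hveq : res (P n * T) (lamn b lam n)
        = 1 + lam • (P n * (res (Sop b P T n) lam * (P n * T))) := by
      have h := ring_inverse_eq_of hc1 hc2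
      exact h
    constructor
    · show IsUnit (1 - lamn b lam n • (P n * T))
      exact isUnit_iff_exists.mpr ⟨_, hc1, hc2⟩
    · rw [hveq, hc3]
  -- the difference operators
  have hDconv : ∀ f : L2,
      Tendsto (fun n => (res (P n * T) (lamn b lam n) * P n - res T lam) f) atTop (𝓝 0) := by
    intro f
    have huconv : Tendsto (fun n => P n (f + lam • fres (Sop b P T n) lam f)) atTop
        (𝓝 (A f)) := Pn_comp_tendsto P tau hproj htau _ _ (hxconv f)
    have hscal : Tendsto (fun n => (1 - lam * b n : ℂ)) atTop (𝓝 1) := by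
      have hlb : Tendsto (fun n => lam * b n) atTop (𝓝 0) := by
        have h0 := hb.const_mul lam
        rw [mul_zero] at h0
        exact h0
      have h := (tendsto_const_nhds (x := (1:ℂ)) (f := atTop (α := ℕ))).sub hlb
      rw [sub_zero] at h
      exact h
    have hmain2 : Tendsto (fun n => (1 - lam * b n) • P n (f + lam • fres (Sop b P T n) lam f)
        - A f) atTop (𝓝 0) := by
      have h := hscal.smul huconv
      rw [one_smul] at h
      have h6 := h.sub (tendsto_const_nhds (x := A f))
      rw [sub_self] at h6
      exact h6
    refine Tendsto.congr' ?_ hmain2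
    filter_upwards [eventually_gt_atTop N, hsmall] with n hn hsm
    have hkey := (hmain n hn hsm).2
    rw [ContinuousLinearMap.sub_apply, hkey, hresT, ContinuousLinearMap.smul_apply,
      ContinuousLinearMap.mul_apply]
    congr 2
    rw [hRF n hn, ContinuousLinearMap.add_apply, ContinuousLinearMap.one_apply,
      ContinuousLinearMap.smul_apply]
  set C : ℝ := 2 * (1 + ‖lam‖ * M) + ‖A‖ + 1 with hC
  have hCpos : 0 < C := by
    have h1 : (0:ℝ) ≤ ‖lam‖ * M := mul_nonneg (norm_nonneg _) hMpos.le
    have h2 : (0:ℝ) ≤ ‖A‖ := norm_nonneg _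
    nlinarith
  have hDbd : ∀ᶠ n in atTop, ‖res (P n * T) (lamn b lam n) * P n - res T lam‖ ≤ C := by
    filter_upwards [eventually_gt_atTop N, hsmall] with n hn hsm
    have hkey := (hmain n hn hsm).2
    have hb1 : ‖(1:ℂ) - lam * b n‖ ≤ 2 := by
      calc ‖(1:ℂ) - lam * b n‖ ≤ ‖(1:ℂ)‖ + ‖lam * b n‖ := norm_sub_le _ _
      _ ≤ 1 + 1/2 := by
          apply add_le_add
          · simp
          · rw [mul_comm]; exact le_of_lt hsm
      _ ≤ 2 := by norm_num
    have hb2 : ‖P n * res (Sop b P T n) lam‖ ≤ 1 + ‖lam‖ * M := by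
      calc ‖P n * res (Sop b P T n) lam‖
          ≤ ‖P n‖ * ‖res (Sop b P T n) lam‖ := norm_mul_le _ _
      _ ≤ 1 * (1 + ‖lam‖ * M) :=
          mul_le_mul (hPnorm n) (hRnorm n hn) (norm_nonneg _) zero_le_one
      _ = 1 + ‖lam‖ * M := one_mul _
    have hA1 : ‖res (P n * T) (lamn b lam n) * P n‖ ≤ 2 * (1 + ‖lam‖ * M) := by
      rw [hkey]
      refine le_trans (ContinuousLinearMap.opNorm_smul_le ((1:ℂ) - lam * b n)
        (P n * res (Sop b P T n) lam)) ?_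
      exact mul_le_mul hb1 hb2 (norm_nonneg _) (by norm_num)
    have hA2 : ‖res T lam‖ = ‖A‖ := by rw [hresT]
    have hA3 := norm_sub_le (res (P n * T) (lamn b lam n) * P n) (res T lam)
    rw [hC]
    linarith
  constructor
  · filter_upwards [eventually_gt_atTop N, hsmall] with n hn hsm
    exact (hmain n hn hsm).1
  · rw [NormedAddCommGroup.tendsto_nhds_zero]
    intro ε hε
    have hcc : ∀ᶠ t in cocompact ℝ, ‖kt' t‖ < ε/(4*C) :=
      NormedAddCommGroup.tendsto_nhds_zero.mp hK.vanish_t' _ (by positivity)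
    obtain ⟨K₀, hK₀c, hK₀⟩ := mem_cocompact.mp hcc
    have hKc : IsCompact (kt' '' K₀) := hK₀c.image hK.cont_t'
    obtain ⟨net, hnetfin, hnetsub⟩ :=
      (Metric.totallyBounded_iff.mp hKc.totallyBounded) (ε/(4*C)) (by positivity)
    have hnet_ev : ∀ᶠ n in atTop, ∀ y ∈ net,
        ‖(res (P n * T) (lamn b lam n) * P n - res T lam) y‖ < ε/4 := by
      rw [eventually_all_finite hnetfin]
      intro y _
      exact NormedAddCommGroup.tendsto_nhds_zero.mp (hDconv y) _ (by positivity)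
    filter_upwards [hDbd, hnet_ev] with n hn1 hn2
    have happD : ∀ t : ℝ, res (P n * T) (lamn b lam n) (P n (kt' t)) - res T lam (kt' t)
        = (res (P n * T) (lamn b lam n) * P n - res T lam) (kt' t) := by
      intro t
      rw [ContinuousLinearMap.sub_apply, ContinuousLinearMap.mul_apply]
    have hpt : ∀ t : ℝ,
        ‖res (P n * T) (lamn b lam n) (P n (kt' t)) - res T lam (kt' t)‖ ≤ ε/2 := by
      intro t
      rw [happD t]
      set D : L2op := res (P n * T) (lamn b lam n) * P n - res T lam with hD
      have hquarter : C * (ε/(4*C)) = ε/4 := by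
        field_simp
      by_cases ht : t ∈ K₀
      · have hmem : kt' t ∈ kt' '' K₀ := ⟨t, ht, rfl⟩
        obtain ⟨y, hy, hyball⟩ := Set.mem_iUnion₂.mp (hnetsub hmem)
        have hdist : ‖kt' t - y‖ < ε/(4*C) := by
          simpa [dist_eq_norm] using hyball
        calc ‖D (kt' t)‖ = ‖D (kt' t - y) + D y‖ := by rw [map_sub, sub_add_cancel]
        _ ≤ ‖D (kt' t - y)‖ + ‖D y‖ := norm_add_le _ _
        _ ≤ C * (ε/(4*C)) + ε/4 := by
            apply add_le_add
            · calc ‖D (kt' t - y)‖ ≤ ‖D‖ * ‖kt' t - y‖ := ContinuousLinearMap.le_opNorm _ _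
              _ ≤ C * (ε/(4*C)) :=
                mul_le_mul hn1 hdist.le (norm_nonneg _) hCpos.le
            · exact (hn2 y hy).le
        _ ≤ ε/2 := by rw [hquarter]; linarith
      · have h3 : ‖kt' t‖ < ε/(4*C) := hK₀ ht
        calc ‖D (kt' t)‖ ≤ ‖D‖ * ‖kt' t‖ := ContinuousLinearMap.le_opNorm _ _
        _ ≤ C * (ε/(4*C)) := mul_le_mul hn1 h3.le (norm_nonneg _) hCpos.le
        _ ≤ ε/2 := by rw [hquarter]; linarith
    have hbdd : BddAbove (Set.range fun t : ℝ =>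
        ‖res (P n * T) (lamn b lam n) (P n (kt' t)) - res T lam (kt' t)‖) := by
      refine ⟨ε/2, ?_⟩
      rintro y ⟨t, rfl⟩
      exact hpt t
    have hsup_le : (⨆ t : ℝ,
        ‖res (P n * T) (lamn b lam n) (P n (kt' t)) - res T lam (kt' t)‖) ≤ ε/2 :=
      ciSup_le hpt
    have hsup_ge : 0 ≤ ⨆ t : ℝ,
        ‖res (P n * T) (lamn b lam n) (P n (kt' t)) - res T lam (kt' t)‖ :=
      le_trans (norm_nonneg _) (le_ciSup hbdd 0)
    rw [Real.norm_eq_abs, abs_of_nonneg hsup_ge]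
    linarith
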